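/- arXiv:2506.11929 — 4 statements merged into one kernel-verified Lean document; each statement's English description precedes it below -/
import Mathlib

section
/- Let v* be the unique minimizer of φ(v) = max_{i=1,...,m} (g_i^T v + (1/2)||v||^2). Then v* = 0 if and only if for every direction d ∈ R^n there exists an index j ∈ {1,...,m} with g_j^T d ≥ 0. -/
open scoped RealInnerProductSpace

theorem stmt_2 {n m : ℕ} (hm : 0 < m) (g : Fin m → EuclideanSpace ℝ (Fin n))
    (φ : EuclideanSpace ℝ (Fin n) → ℝ)
    (hφ : ∀ v, φ v = Finset.univ.sup' ⟨⟨0, hm⟩, Finset.mem_univ _⟩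
      (fun i => ⟪g i, v⟫ + (1 / 2) * ‖v‖ ^ 2))
    (vstar : EuclideanSpace ℝ (Fin n)) (hmin : IsMinOn φ Set.univ vstar) :
    vstar = 0 ↔ ∀ d : EuclideanSpace ℝ (Fin n), ∃ j : Fin m, 0 ≤ ⟪g j, d⟫ := by
  have hφ0 : φ 0 = 0 := by
    rw [hφ]; simp; exact Finset.sup'_const _ _
  constructor
  · rintro rfl d
    by_contra h
    push_neg at h
    have hd : d ≠ 0 := by
      intro hd0
      have := h ⟨0, hm⟩
      rw [hd0, inner_zero_right] at this
      exact lt_irrefl _ this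
    set M : ℝ := Finset.univ.sup' ⟨⟨0, hm⟩, Finset.mem_univ _⟩ (fun i => ⟪g i, d⟫) with hM
    have hMneg : M < 0 := by
      rw [hM]; refine (Finset.sup'_lt_iff _).mpr ?_
      intro i _; exact h i
    have hdn : (0:ℝ) < ‖d‖ ^ 2 := by
      have : 0 < ‖d‖ := norm_pos_iff.mpr hd
      positivity
    set t : ℝ := -M / ‖d‖ ^ 2 with ht_def
    have ht : 0 < t := div_pos (neg_pos.mpr hMneg) hdn
    have htd : t * ‖d‖ ^ 2 = -M := div_mul_cancel₀ _ (ne_of_gt hdn)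
    have hlt : φ (t • d) < 0 := by
      rw [hφ]; refine (Finset.sup'_lt_iff _).mpr ?_
      intro i _
      have h1 : ⟪g i, t • d⟫ = t * ⟪g i, d⟫ := real_inner_smul_right _ _ _
      have h2 : ‖t • d‖ ^ 2 = t ^ 2 * ‖d‖ ^ 2 := by
        rw [norm_smul, mul_pow, Real.norm_eq_abs, sq_abs]
      have hiM : ⟪g i, d⟫ ≤ M := Finset.le_sup' (fun i => ⟪g i, d⟫) (Finset.mem_univ i)
      have : t * ⟪g i, d⟫ ≤ t * M := mul_le_mul_of_nonneg_left hiM ht.le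
      rw [h1, h2]
      nlinarith [ht, hMneg]
    have hge := hmin (Set.mem_univ (t • d))
    simp only [hφ0] at hge
    exact absurd (lt_of_le_of_lt hge hlt) (lt_irrefl 0)
  · intro h
    obtain ⟨j, hj⟩ := h vstar
    have h1 : φ vstar ≤ 0 := by
      have := hmin (Set.mem_univ (0 : EuclideanSpace ℝ (Fin n)))
      simpa [hφ0] using this
    have h2 : ⟪g j, vstar⟫ + (1 / 2) * ‖vstar‖ ^ 2 ≤ φ vstar := by
      rw [hφ]
      exact Finset.le_sup' (fun i => ⟪g i, vstar⟫ + (1 / 2) * ‖vstar‖ ^ 2) (Finset.mem_univ j)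
    have hns : ‖vstar‖ = 0 := by nlinarith [norm_nonneg vstar, sq_nonneg ‖vstar‖]
    exact norm_eq_zero.mp hns
end

section
/- If 0 is a global minimizer of s ↦ m^p(x,s) (with positive regularization parameters), then x is Pareto-stationary, i.e., for every d ∈ R^n there exists i with ∇f_i(x)^T d ≥ 0. -/
open scoped RealInnerProductSpace

theorem stmt_10 {n m p : ℕ} (hm : 0 < m) (hp : 1 ≤ p)
    (f : Fin m → EuclideanSpace ℝ (Fin n) → ℝ)
    (hf : ∀ i, ContDiff ℝ p (f i))
    (L : Fin m → ℝ)
    (hLip : ∀ i, ∀ x y : EuclideanSpace ℝ (Fin n),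
      ‖iteratedFDeriv ℝ p (f i) x - iteratedFDeriv ℝ p (f i) y‖ ≤ L i * ‖x - y‖)
    (x : EuclideanSpace ℝ (Fin n)) (σ : Fin m → ℝ) (hσ : ∀ i, 0 < σ i)
    (M : EuclideanSpace ℝ (Fin n) → ℝ)
    (hM : ∀ s, M s = Finset.univ.sup' ⟨⟨0, hm⟩, Finset.mem_univ _⟩ (fun i =>
      (∑ j ∈ Finset.Icc 1 p, (1 / (j.factorial : ℝ)) * iteratedFDeriv ℝ j (f i) x (fun _ => s))
        + (σ i / (p.factorial : ℝ)) * ‖s‖ ^ (p + 1)))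
    (hmin : IsMinOn M Set.univ 0) :
    ∀ d : EuclideanSpace ℝ (Fin n), ∃ i : Fin m, 0 ≤ ⟪gradient (f i) x, d⟫ := by
  intro d
  by_contra hcon
  push_neg at hcon
  have hne : (Finset.univ : Finset (Fin m)).Nonempty := ⟨⟨0, hm⟩, Finset.mem_univ _⟩
  -- M 0 = 0
  have hM0 : M 0 = 0 := by
    rw [hM]
    have : ∀ i : Fin m,
        (∑ j ∈ Finset.Icc 1 p, (1 / (j.factorial : ℝ)) *
            iteratedFDeriv ℝ j (f i) x (fun _ => (0 : EuclideanSpace ℝ (Fin n))))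
          + (σ i / (p.factorial : ℝ)) * ‖(0 : EuclideanSpace ℝ (Fin n))‖ ^ (p + 1) = 0 := by
      intro i
      have h1 : ∀ j ∈ Finset.Icc 1 p, (1 / (j.factorial : ℝ)) *
          iteratedFDeriv ℝ j (f i) x (fun _ => (0 : EuclideanSpace ℝ (Fin n))) = 0 := by
        intro j hj
        have hj1 : 1 ≤ j := (Finset.mem_Icc.mp hj).1
        rw [ContinuousMultilinearMap.map_coord_zero _ (⟨0, hj1⟩ : Fin j) rfl, mul_zero]
      rw [Finset.sum_eq_zero h1, norm_zero, zero_pow (by omega), mul_zero, add_zero]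
    exact (Finset.sup'_congr _ rfl (fun i _ => this i)).trans (by simp)
  have hnonneg : ∀ s, 0 ≤ M s := by
    intro s
    have := hmin (Set.mem_univ s)
    rwa [hM0] at this
  -- inner product as a derivative
  have hgrad : ∀ i : Fin m, ⟪gradient (f i) x, d⟫ = fderiv ℝ (f i) x d := by
    intro i
    rw [gradient, InnerProductSpace.toDual_symm_apply]
  -- coefficients
  set a : Fin m → ℕ → ℝ := fun i j => (1 / (j.factorial : ℝ)) *
      iteratedFDeriv ℝ j (f i) x (fun _ => d) with ha
  set b : Fin m → ℝ := fun i => (σ i / (p.factorial : ℝ)) * ‖d‖ ^ (p + 1) with hb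
  set ψ : Fin m → ℝ → ℝ := fun i t =>
      (∑ j ∈ Finset.Icc 1 p, t ^ (j - 1) * a i j) + b i * t ^ p with hψ
  -- value of ψ at 0
  have hψ0 : ∀ i, ψ i 0 = ⟪gradient (f i) x, d⟫ := by
    intro i
    have hsum : (∑ j ∈ Finset.Icc 1 p, (0:ℝ) ^ (j - 1) * a i j) = a i 1 := by
      rw [Finset.sum_eq_single_of_mem 1 (Finset.mem_Icc.mpr ⟨le_refl 1, hp⟩)]
      · norm_num
      · intro j hj hj1
        have : 1 ≤ j := (Finset.mem_Icc.mp hj).1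
        rw [zero_pow (by omega), zero_mul]
    rw [hψ]
    simp only [hsum, zero_pow (by omega : p ≠ 0), mul_zero, add_zero]
    rw [ha, hgrad i]
    simp [iteratedFDeriv_one_apply]
  -- continuity of ψ i
  have hψcont : ∀ i, Continuous (ψ i) := by
    intro i
    apply Continuous.add
    · exact continuous_finset_sum _ fun j _ => (continuous_pow _).mul continuous_const
    · exact continuous_const.mul (continuous_pow _)
  -- eventually all ψ i t < 0
  have hev : ∀ᶠ t in nhdsWithin (0:ℝ) (Set.Ioi 0), ∀ i, ψ i t < 0 := by
    rw [Filter.eventually_all]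
    intro i
    have hlt : ψ i 0 < 0 := by rw [hψ0]; exact hcon i
    have := ((hψcont i).tendsto 0).eventually_lt_const hlt
    exact this.filter_mono nhdsWithin_le_nhds
  have hmem : ∀ᶠ t in nhdsWithin (0:ℝ) (Set.Ioi 0), t ∈ Set.Ioi (0:ℝ) :=
    self_mem_nhdsWithin
  obtain ⟨t, ht, htpos⟩ := (hev.and hmem).exists
  rw [Set.mem_Ioi] at htpos
  -- compute M (t • d)
  have hval : ∀ i : Fin m,
      (∑ j ∈ Finset.Icc 1 p, (1 / (j.factorial : ℝ)) *
          iteratedFDeriv ℝ j (f i) x (fun _ => t • d))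
        + (σ i / (p.factorial : ℝ)) * ‖t • d‖ ^ (p + 1) = t * ψ i t := by
    intro i
    have hterm : ∀ j ∈ Finset.Icc 1 p, (1 / (j.factorial : ℝ)) *
        iteratedFDeriv ℝ j (f i) x (fun _ => t • d) = t * (t ^ (j - 1) * a i j) := by
      intro j hj
      have hj1 : 1 ≤ j := (Finset.mem_Icc.mp hj).1
      have hmap : iteratedFDeriv ℝ j (f i) x (fun _ => t • d)
          = t ^ j * iteratedFDeriv ℝ j (f i) x (fun _ => d) := by
        have := (iteratedFDeriv ℝ j (f i) x).map_smul_univ (fun _ : Fin j => t)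
          (fun _ => d)
        simpa [Finset.prod_const, smul_eq_mul] using this
      rw [hmap, ha]
      have : t ^ j = t * t ^ (j - 1) := by
        conv_lhs => rw [show j = (j - 1) + 1 by omega]
        rw [pow_succ]; ring
      rw [this]; ring
    have hnorm : ‖t • d‖ ^ (p + 1) = t ^ (p + 1) * ‖d‖ ^ (p + 1) := by
      rw [norm_smul, Real.norm_eq_abs, abs_of_pos htpos, mul_pow]
    rw [Finset.sum_congr rfl hterm, ← Finset.mul_sum, hnorm, hψ, hb]
    have : t ^ (p + 1) = t * t ^ p := by rw [pow_succ]; ring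
    rw [this]; ring
  have hMtd : M (t • d) < 0 := by
    rw [hM]
    refine lt_of_eq_of_lt (Finset.sup'_congr _ rfl (fun i _ => hval i)) ?_
    rw [Finset.sup'_lt_iff]
    intro i _
    exact mul_neg_of_pos_of_neg htpos (ht i)
  exact absurd (hnonneg (t • d)) (not_le.mpr hMtd)
end

section
/- Let x ∈ R^n, η ∈ (0,1), and suppose each ∇^p f_i is Lipschitz with constant L_i and σ_i ≥ L_i/(1−η) for each i. If s̄ is a global minimizer of m^p(x,·) with regularization vector σ, then f_i(x+s̄) ≤ f_i(x) − η(σ_i/p!)||s̄||^{p+1} for every i = 1,...,m. -/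
open Set Finset

lemma line_iteratedDeriv {E : Type*} [NormedAddCommGroup E] [NormedSpace ℝ E]
    (f : E → ℝ) {p : ℕ} (hf : ContDiff ℝ p f) (x v : E) :
    ∀ j ≤ p, ∀ t : ℝ,
      iteratedDeriv j (fun t : ℝ => f (x + t • v)) t
        = iteratedFDeriv ℝ j f (x + t • v) (fun _ => v) := by
  intro j
  induction j with
  | zero => intro _ t; simp
  | succ j IH =>
    intro hj t
    rw [iteratedDeriv_succ]
    have IH' : iteratedDeriv j (fun t : ℝ => f (x + t • v))
        = fun t : ℝ => iteratedFDeriv ℝ j f (x + t • v) (fun _ => v) :=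
      funext fun t => IH (le_trans (Nat.le_succ j) hj) t
    rw [IH']
    have hc : HasDerivAt (fun t : ℝ => x + t • v) v t := by
      simpa using ((hasDerivAt_id t).smul_const v).const_add x
    have hF : ContDiff ℝ 1 (iteratedFDeriv ℝ j f) :=
      hf.iteratedFDeriv_right (by norm_cast; omega)
    have hFd : HasFDerivAt (iteratedFDeriv ℝ j f)
        (fderiv ℝ (iteratedFDeriv ℝ j f) (x + t • v)) (x + t • v) :=
      ((hF.differentiable one_ne_zero) (x + t • v)).hasFDerivAt
    have hcomp : HasDerivAt (fun t : ℝ => iteratedFDeriv ℝ j f (x + t • v))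
        (fderiv ℝ (iteratedFDeriv ℝ j f) (x + t • v) v) t := hFd.comp_hasDerivAt t hc
    have happ := (ContinuousMultilinearMap.apply ℝ (fun _ : Fin j => E) ℝ
      (fun _ => v)).hasFDerivAt.comp_hasDerivAt t hcomp
    have happ' : HasDerivAt (fun t : ℝ => iteratedFDeriv ℝ j f (x + t • v) (fun _ => v))
        ((fderiv ℝ (iteratedFDeriv ℝ j f) (x + t • v) v) (fun _ => v)) t := happ
    rw [happ'.deriv, iteratedFDeriv_succ_apply_left]
    rfl

lemma taylor_line_bound {E : Type*} [NormedAddCommGroup E] [NormedSpace ℝ E]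
    (f : E → ℝ) {p : ℕ} (hp : 1 ≤ p) (hf : ContDiff ℝ p f) (x v : E) :
    ∃ x' ∈ Ioo (0:ℝ) 1,
      f (x + v) = f x
        + (∑ j ∈ Finset.Icc 1 p, (1 / (j.factorial : ℝ)) * iteratedFDeriv ℝ j f x (fun _ => v))
        + ((iteratedFDeriv ℝ p f (x + x' • v) - iteratedFDeriv ℝ p f x) (fun _ => v))
            / (p.factorial : ℝ) := by
  obtain ⟨q, rfl⟩ : ∃ q, p = q + 1 := ⟨p - 1, (Nat.succ_pred_eq_of_pos hp).symm⟩
  set g : ℝ → ℝ := fun t => f (x + t • v) with hgdef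
  have hline : ContDiff ℝ (q + 1 : ℕ) (fun t : ℝ => x + t • v) :=
    contDiff_const.add (contDiff_id.smul contDiff_const)
  have hg : ContDiff ℝ (q + 1 : ℕ) g := hf.comp hline
  have heq : ∀ k ≤ q + 1, ∀ y ∈ Icc (0:ℝ) 1,
      iteratedDerivWithin k g (Icc 0 1) y = iteratedDeriv k g y := by
    intro k hk y hy
    rw [iteratedDerivWithin_eq_iteratedFDerivWithin, iteratedDeriv_eq_iteratedFDeriv]
    congr 1
    exact (((hasFTaylorSeriesUpToOn_univ_iff.2
        (contDiff_iff_ftaylorSeries.1 hg)).mono (subset_univ _)).eq_iteratedFDerivWithin_of_uniqueDiffOn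
        (by exact_mod_cast hk) (uniqueDiffOn_Icc one_pos) hy).symm
  have hD : Differentiable ℝ (iteratedDeriv q g) := by
    have : iteratedDeriv q g = fun t => (iteratedFDeriv ℝ q g t) (fun _ => (1:ℝ)) :=
      funext fun t => iteratedDeriv_eq_iteratedFDeriv
    rw [this]
    exact ((hg.iteratedFDeriv_right (m := 1) (by norm_cast; omega)).differentiable
      one_ne_zero).continuousMultilinear_apply_const _
  have hdiffon : DifferentiableOn ℝ (iteratedDerivWithin q g (Icc 0 1)) (Ioo 0 1) := by
    intro y hy
    exact (hD y).differentiableWithinAt.congr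
      (fun z hz => heq q (Nat.le_succ q) z (Set.Ioo_subset_Icc_self hz))
      (heq q (Nat.le_succ q) y (Set.Ioo_subset_Icc_self hy))
  obtain ⟨x', hx', hT⟩ := taylor_mean_remainder_lagrange (n := q) (x₀ := 0) (x := 1) zero_ne_one
    (by rw [Set.uIcc_of_le zero_le_one]; exact ((hg.of_le (by exact_mod_cast Nat.le_succ q)).contDiffOn))
    (by rw [Set.uIcc_of_le zero_le_one, Set.uIoo_of_le zero_le_one]; exact hdiffon)
  rw [Set.uIcc_of_le zero_le_one] at hT
  rw [Set.uIoo_of_le zero_le_one] at hx'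
  refine ⟨x', hx', ?_⟩
  have h0 : (0:ℝ) ∈ Icc (0:ℝ) 1 := by constructor <;> norm_num
  have hxm : x' ∈ Icc (0:ℝ) 1 := Set.Ioo_subset_Icc_self hx'
  rw [taylor_within_apply] at hT
  have hL := line_iteratedDeriv f hf x v
  have hsum : ∀ k ∈ Finset.range (q + 1),
      ((k.factorial : ℝ)⁻¹ * (1 - 0) ^ k) • iteratedDerivWithin k g (Icc 0 1) 0
        = ((k.factorial : ℝ))⁻¹ * iteratedFDeriv ℝ k f x (fun _ => v) := by
    intro k hk
    have hk' : k ≤ q + 1 := by have := Finset.mem_range.1 hk; omega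
    rw [heq k hk' 0 h0, hL k hk' 0]
    simp
  rw [Finset.sum_congr rfl hsum] at hT
  have hg1 : g 1 = f (x + v) := by simp [hgdef]
  have hgp : iteratedDerivWithin (q + 1) g (Icc 0 1) x'
      = iteratedFDeriv ℝ (q + 1) f (x + x' • v) (fun _ => v) := by
    rw [heq (q + 1) le_rfl x' hxm, hL (q + 1) le_rfl x']
  rw [hg1, hgp] at hT
  -- now pure algebra
  set A : ℕ → ℝ := fun k => ((k.factorial : ℝ))⁻¹ * iteratedFDeriv ℝ k f x (fun _ => v) with hA
  have hIcc : ∑ j ∈ Finset.Icc 1 (q + 1), (1 / (j.factorial : ℝ))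
        * iteratedFDeriv ℝ (j) f x (fun _ => v) = ∑ i ∈ Finset.range (q + 1), A (1 + i) := by
    rw [← Finset.Ico_add_one_right_eq_Icc, Finset.sum_Ico_eq_sum_range]
    simp [hA, one_div]
  have hsplit : ∑ k ∈ Finset.range (q + 1), A k + A (q + 1)
      = A 0 + ∑ i ∈ Finset.range (q + 1), A (1 + i) := by
    rw [Finset.sum_range_succ' A q, Finset.sum_range_succ (fun i => A (1 + i)) q]
    simp only [add_comm 1]
    ring
  have hA0 : A 0 = f x := by simp [hA]
  have hfac : ((q + 1).factorial : ℝ) ≠ 0 := Nat.cast_ne_zero.2 (Nat.factorial_ne_zero _)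
  have hsub : ((iteratedFDeriv ℝ (q+1) f (x + x' • v) - iteratedFDeriv ℝ (q+1) f x) (fun _ => v))
      = iteratedFDeriv ℝ (q+1) f (x + x' • v) (fun _ => v)
        - iteratedFDeriv ℝ (q+1) f x (fun _ => v) := rfl
  rw [hIcc, hsub]
  have hT' : f (x + v) = ∑ k ∈ Finset.range (q + 1), A k
      + iteratedFDeriv ℝ (q + 1) f (x + x' • v) (fun _ => v) / ((q + 1).factorial : ℝ) := by
    have := hT
    rw [sub_zero, one_pow, mul_one] at this
    field_simp at this ⊢
    linarith [this]
  rw [hT']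
  have hAp : A (q + 1) = ((q+1).factorial : ℝ)⁻¹ * iteratedFDeriv ℝ (q+1) f x (fun _ => v) := rfl
  have := hsplit
  rw [hA0] at this
  rw [hAp] at this
  field_simp at this ⊢
  linarith [this]

theorem stmt_11 {n m p : ℕ} (hm : 0 < m) (hp : 1 ≤ p)
    (f : Fin m → EuclideanSpace ℝ (Fin n) → ℝ)
    (hf : ∀ i, ContDiff ℝ p (f i))
    (L : Fin m → ℝ)
    (hLip : ∀ i, ∀ x y : EuclideanSpace ℝ (Fin n),
      ‖iteratedFDeriv ℝ p (f i) x - iteratedFDeriv ℝ p (f i) y‖ ≤ L i * ‖x - y‖)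
    (η : ℝ) (hη : 0 < η) (hη1 : η < 1)
    (x : EuclideanSpace ℝ (Fin n)) (σ : Fin m → ℝ) (hσ : ∀ i, 0 < σ i)
    (hσL : ∀ i, L i / (1 - η) ≤ σ i)
    (M : EuclideanSpace ℝ (Fin n) → ℝ)
    (hM : ∀ s, M s = Finset.univ.sup' ⟨⟨0, hm⟩, Finset.mem_univ _⟩ (fun i =>
      (∑ j ∈ Finset.Icc 1 p, (1 / (j.factorial : ℝ)) * iteratedFDeriv ℝ j (f i) x (fun _ => s))
        + (σ i / (p.factorial : ℝ)) * ‖s‖ ^ (p + 1)))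
    (sbar : EuclideanSpace ℝ (Fin n)) (hmin : IsMinOn M Set.univ sbar) :
    ∀ i, f i (x + sbar) ≤ f i x - η * (σ i / (p.factorial : ℝ)) * ‖sbar‖ ^ (p + 1) := by
  intro i
  have hfac : (0:ℝ) < (p.factorial : ℝ) := by exact_mod_cast Nat.factorial_pos p
  have h1η : (0:ℝ) < 1 - η := by linarith
  have hησ : L i ≤ (1 - η) * σ i := by
    have := hσL i
    rw [div_le_iff₀ h1η] at this
    linarith
  -- M 0 = 0
  have hterm0 : ∀ k : Fin m,
      (∑ j ∈ Finset.Icc 1 p, (1 / (j.factorial : ℝ))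
          * iteratedFDeriv ℝ j (f k) x (fun _ => (0 : EuclideanSpace ℝ (Fin n))))
        + (σ k / (p.factorial : ℝ)) * ‖(0 : EuclideanSpace ℝ (Fin n))‖ ^ (p + 1) = 0 := by
    intro k
    have hz : ∀ j ∈ Finset.Icc 1 p,
        (1 / (j.factorial : ℝ))
          * iteratedFDeriv ℝ j (f k) x (fun _ => (0 : EuclideanSpace ℝ (Fin n))) = 0 := by
      intro j hj
      have hj1 : 0 < j := (Finset.mem_Icc.1 hj).1
      rw [(iteratedFDeriv ℝ j (f k) x).map_coord_zero (⟨0, hj1⟩ : Fin j) rfl, mul_zero]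
    rw [Finset.sum_eq_zero hz]
    simp
  have hM0 : M 0 = 0 := by
    rw [hM]
    refine le_antisymm (Finset.sup'_le _ _ fun k _ => le_of_eq (hterm0 k)) ?_
    have h2 := Finset.le_sup' (fun k : Fin m =>
      (∑ j ∈ Finset.Icc 1 p, (1 / (j.factorial : ℝ))
          * iteratedFDeriv ℝ j (f k) x (fun _ => (0 : EuclideanSpace ℝ (Fin n))))
        + (σ k / (p.factorial : ℝ)) * ‖(0 : EuclideanSpace ℝ (Fin n))‖ ^ (p + 1))
      (Finset.mem_univ (⟨0, hm⟩ : Fin m))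
    rw [hterm0 ⟨0, hm⟩] at h2
    exact h2
  have hMs : M sbar ≤ 0 := hM0 ▸ (isMinOn_iff.1 hmin 0 (Set.mem_univ _))
  have hti : (∑ j ∈ Finset.Icc 1 p, (1 / (j.factorial : ℝ))
        * iteratedFDeriv ℝ j (f i) x (fun _ => sbar))
      + (σ i / (p.factorial : ℝ)) * ‖sbar‖ ^ (p + 1) ≤ 0 := by
    have h1 := Finset.le_sup' (fun k : Fin m =>
      (∑ j ∈ Finset.Icc 1 p, (1 / (j.factorial : ℝ))
          * iteratedFDeriv ℝ j (f k) x (fun _ => sbar))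
        + (σ k / (p.factorial : ℝ)) * ‖sbar‖ ^ (p + 1)) (Finset.mem_univ i)
    rw [← hM sbar] at h1
    exact le_trans h1 hMs
  by_cases hs0 : sbar = 0
  · subst hs0
    simp [hη, hσ i, hfac]
  · have hsn : 0 < ‖sbar‖ := norm_pos_iff.2 hs0
    have hL0 : 0 ≤ L i := by
      have h := hLip i (x + sbar) x
      have h2 : ‖x + sbar - x‖ = ‖sbar‖ := by rw [add_sub_cancel_left]
      rw [h2] at h
      nlinarith [norm_nonneg (iteratedFDeriv ℝ p (f i) (x + sbar) - iteratedFDeriv ℝ p (f i) x)]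
    obtain ⟨x', hx', hT⟩ := taylor_line_bound (f i) hp (hf i) x sbar
    set Δ := iteratedFDeriv ℝ p (f i) (x + x' • sbar) - iteratedFDeriv ℝ p (f i) x with hΔ
    have hnorm : ‖Δ (fun _ => sbar)‖ ≤ ‖Δ‖ * ‖sbar‖ ^ p := by
      have := Δ.le_opNorm (fun _ => sbar)
      simpa using this
    have hΔn : ‖Δ‖ ≤ L i * (x' * ‖sbar‖) := by
      have h := hLip i (x + x' • sbar) x
      have h2 : ‖x + x' • sbar - x‖ = x' * ‖sbar‖ := by
        rw [add_sub_cancel_left, norm_smul, Real.norm_eq_abs, abs_of_pos hx'.1]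
      rw [h2] at h
      exact h
    have hpow : (0:ℝ) ≤ ‖sbar‖ ^ (p + 1) := by positivity
    have hpowp : (0:ℝ) < ‖sbar‖ ^ p := by positivity
    have hx1 : x' ≤ 1 := le_of_lt hx'.2
    have hΔ2 : ‖Δ‖ ≤ L i * ‖sbar‖ := by
      nlinarith [hΔn, mul_nonneg (mul_nonneg hL0 hsn.le) (sub_nonneg.2 hx1)]
    have hR : Δ (fun _ => sbar) ≤ L i * ‖sbar‖ ^ (p + 1) := by
      have h1 : Δ (fun _ => sbar) ≤ ‖Δ (fun _ => sbar)‖ := le_abs_self _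
      have h2 : ‖Δ‖ * ‖sbar‖ ^ p ≤ (L i * ‖sbar‖) * ‖sbar‖ ^ p :=
        mul_le_mul_of_nonneg_right hΔ2 hpowp.le
      have e : ‖sbar‖ ^ (p + 1) = ‖sbar‖ * ‖sbar‖ ^ p := by ring
      rw [e]; linarith
    rw [hT]
    have hdiv : Δ (fun _ => sbar) / (p.factorial : ℝ)
        ≤ L i * ‖sbar‖ ^ (p + 1) / (p.factorial : ℝ) :=
      div_le_div_of_nonneg_right hR hfac.le
    have h5 : L i * ‖sbar‖ ^ (p + 1) / (p.factorial : ℝ)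
        ≤ (1 - η) * σ i * ‖sbar‖ ^ (p + 1) / (p.factorial : ℝ) :=
      div_le_div_of_nonneg_right (mul_le_mul_of_nonneg_right hησ hpow) hfac.le
    have e2 : (1 - η) * σ i * ‖sbar‖ ^ (p + 1) / (p.factorial : ℝ)
        = σ i / (p.factorial : ℝ) * ‖sbar‖ ^ (p + 1)
          - η * (σ i / (p.factorial : ℝ)) * ‖sbar‖ ^ (p + 1) := by ring
    linarith [hti, hdiv, h5]
end

section
/- Let Y ⊂ R^n be finite, y ∈ R^n, ν > 0, and suppose for every x ∈ Y there exists an index i with f_i(y) ≤ f_i(x) − ν. Let ρ ∈ R^m satisfy ρ ≥ F(x) + ν·1 for all x ∈ Y ∪ {y}. Then HI(F(Y ∪ {y})) − HI(F(Y)) ≥ ν^m, where HI(A) = vol(∪_{a∈A} [a, ρ]) is the hypervolume indicator with reference point ρ. -/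
open MeasureTheory

theorem stmt_13 {n m : ℕ} (f : Fin m → EuclideanSpace ℝ (Fin n) → ℝ)
    (F : EuclideanSpace ℝ (Fin n) → (Fin m → ℝ)) (hF : ∀ x i, F x i = f i x)
    (Y : Finset (EuclideanSpace ℝ (Fin n))) (y : EuclideanSpace ℝ (Fin n))
    (ν : ℝ) (hν : 0 < ν)
    (hgood : ∀ x ∈ Y, ∃ i, f i y ≤ f i x - ν)
    (ρ : Fin m → ℝ)
    (hρ : ∀ x ∈ insert y (Y : Set (EuclideanSpace ℝ (Fin n))), ∀ i, F x i + ν ≤ ρ i) :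
    volume (⋃ x ∈ insert y (Y : Set (EuclideanSpace ℝ (Fin n))), Set.Icc (F x) ρ)
      ≥ volume (⋃ x ∈ (Y : Set (EuclideanSpace ℝ (Fin n))), Set.Icc (F x) ρ)
        + ENNReal.ofReal (ν ^ m) := by
  set U := ⋃ x ∈ (Y : Set (EuclideanSpace ℝ (Fin n))), Set.Icc (F x) ρ with hU
  set B := Set.univ.pi (fun i => Set.Ico (F y i) (F y i + ν)) with hBdef
  have hBmeas : MeasurableSet B := MeasurableSet.univ_pi fun i => measurableSet_Ico
  have hBvol : volume B = ENNReal.ofReal (ν ^ m) := by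
    rw [hBdef, volume_pi_pi]
    simp [Real.volume_Ico, ENNReal.ofReal_pow hν.le]
  have hBsub : B ⊆ Set.Icc (F y) ρ := by
    intro z hz
    rw [Set.mem_Icc]
    constructor <;> intro i
    · exact (hz i trivial).1
    · exact le_trans (hz i trivial).2.le (hρ y (Set.mem_insert _ _) i)
  have hdisj : Disjoint U B := by
    rw [Set.disjoint_left]
    rintro z hzU hzB
    simp only [hU, Set.mem_iUnion, Set.mem_Icc] at hzU
    obtain ⟨x, hx, hle, _⟩ := hzU
    obtain ⟨i, hi⟩ := hgood x hx
    have h1 : F y i + ν ≤ F x i := by rw [hF, hF]; linarith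
    have h2 : z i < F y i + ν := (hzB i trivial).2
    have h3 : F x i ≤ z i := hle i
    linarith
  have hsub : U ∪ B ⊆ ⋃ x ∈ insert y (Y : Set (EuclideanSpace ℝ (Fin n))), Set.Icc (F x) ρ := by
    rw [Set.biUnion_insert]
    exact Set.union_subset (Set.subset_union_right)
      (hBsub.trans (Set.subset_union_left))
  calc volume (⋃ x ∈ insert y (Y : Set (EuclideanSpace ℝ (Fin n))), Set.Icc (F x) ρ)
      ≥ volume (U ∪ B) := measure_mono hsub
    _ = volume U + volume B := measure_union hdisj hBmeas
    _ = volume U + ENNReal.ofReal (ν ^ m) := by rw [hBvol]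
end
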